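/- Let X be a measurable space, let c ≥ 2, and let μ be a probability measure on X × Finset (Fin c) (the joint distribution of an instance and its candidate label set), with π : X × Finset (Fin c) → X the first projection. Let η : X → (Fin c → ℝ) assign to each instance a class-posterior probability vector, and let y : X → Fin c satisfy η x (y x) > η x j for every j ≠ y x. Define the margin u(x) = η x (y x) − max_{j ≠ y x} η x j. Fix constants 0 < ε < 1, α > 0, 0 < c_* ≤ c^*, and set l = c^*/c_*. Assume: (i) the pushforward of μ under u ∘ π equals the Lebesgue measure restricted to [0,1] with density d, where c_* ≤ d(t) ≤ c^* for all t ∈ [0,1]; (ii) (pure (e, f)-level set after purification) for μ-almost every (z, S), if u(z) ≥ e then every j ∈ S equals y z; (iii) (approximation) a function f : X → (Fin c → ℝ) satisfies, for every x ∈ X and every j ∈ Fin c, |f x j − η x j| ≤ α · μ({(z,S) : j ∈ S ∧ j ≠ y z} ∩ {(z,S) : u(z) ≥ u(x)}) / μ({(z,S) : u(z) ≥ u(x)}) + ε/6. Let e_new be a real number with e_new ≥ ε such that for every x with u(x) ≥ e_new one has e < η x (y x) ≤ 1 and (ε/(6 l α)) · (η x (y x) − e) ≤ e − e_new ≤ (ε/(3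 l α)) · (η x (y x) − e). Then the level set L(e_new) = {x : u(x) ≥ e_new} is pure for f, i.e., for every x with u(x) ≥ e_new and every j ∈ Fin c, f x (y x) ≥ f x j; and moreover for every such x, η x (y x) − e_new ≥ (1 + ε/(6 α l)) · (η x (y x) − e). -/

import Mathlib

open MeasureTheory

/-- Theorem 1 of the paper: given a pure `(e,f)`-level set (hypothesis `hpure`, almost surely no
incorrect candidate label survives on the region of margin at least `e`), an approximation
guarantee for the scoring function `f` (hypothesis `happrox`), and the margin density assumption
(hypotheses `hlaw`, `hd`), a new threshold `e_new` chosen with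
`(ε/(6lα))·(p(yˣ|x) − e) ≤ e − e_new ≤ (ε/(3lα))·(p(yˣ|x) − e)` yields a level set `L(e_new)`
that is again pure for `f`, and the purified region grows by the factor `1 + ε/(6αl)`. -/
theorem pure_level_set_growth
    {X : Type*} [MeasurableSpace X] (c : ℕ) (hc : 2 ≤ c)
    [MeasurableSpace (Finset (Fin c))]
    (μ : Measure (X × Finset (Fin c))) [IsProbabilityMeasure μ]
    -- class-posterior probability vectors
    (η : X → Fin c → ℝ)
    (hη_nonneg : ∀ x j, 0 ≤ η x j) (hη_sum : ∀ x, ∑ j, η x j = 1)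
    -- the Bayes-optimal (true) label has strictly highest posterior
    (y : X → Fin c) (hy : ∀ x, ∀ j, j ≠ y x → η x j < η x (y x))
    -- the margin: η x (y x) − u x is the largest posterior among labels ≠ y x
    (u : X → ℝ)
    (hu : ∀ x, IsGreatest ((fun j => η x j) '' {j | j ≠ y x}) (η x (y x) - u x))
    -- constants
    (ε α cstar cStar l e : ℝ)
    (hε0 : 0 < ε) (hε1 : ε < 1) (hα : 0 < α)
    (hcstar : 0 < cstar) (hcc : cstar ≤ cStar) (hl : l = cStar / cstar)
    -- (i) margin density assumption: the law of the margin is `d · Leb|_{[0,1]}`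
    (d : ℝ → ℝ)
    (hlaw : μ.map (fun zS => u zS.1) =
      (volume.restrict (Set.Icc (0 : ℝ) 1)).withDensity (fun t => ENNReal.ofReal (d t)))
    (hd : ∀ t ∈ Set.Icc (0 : ℝ) 1, cstar ≤ d t ∧ d t ≤ cStar)
    -- (ii) pure (e,f)-level set after purification: almost surely, every surviving candidate
    -- label of an instance with margin at least `e` is the true label
    (hpure : ∀ᵐ zS ∂μ, u zS.1 ≥ e → ∀ j ∈ zS.2, j = y zS.1)
    -- (iii) approximation guarantee for the scoring function `f`
    (f : X → Fin c → ℝ)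
    (happrox : ∀ x, ∀ j : Fin c,
      |f x j - η x j| ≤
        α * (μ ({zS | j ∈ zS.2 ∧ j ≠ y zS.1} ∩ {zS | u zS.1 ≥ u x})).toReal /
          (μ {zS | u zS.1 ≥ u x}).toReal + ε / 6)
    -- choice of the new threshold
    (e_new : ℝ) (he_new : e_new ≥ ε)
    (hchoice : ∀ x, u x ≥ e_new →
      e < η x (y x) ∧ η x (y x) ≤ 1 ∧
      ε / (6 * l * α) * (η x (y x) - e) ≤ e - e_new ∧
      e - e_new ≤ ε / (3 * l * α) * (η x (y x) - e)) :
    -- conclusion: L(e_new) is pure for f, and the purified region grows by 1 + ε/(6αl)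
    (∀ x, u x ≥ e_new → ∀ j : Fin c, f x (y x) ≥ f x j) ∧
    (∀ x, u x ≥ e_new →
      η x (y x) - e_new ≥ (1 + ε / (6 * α * l)) * (η x (y x) - e)) := by
  have hl1 : (1 : ℝ) ≤ l := by rw [hl]; exact (one_le_div hcstar).2 hcc
  have hl0 : (0 : ℝ) < l := lt_of_lt_of_le one_pos hl1
  have hcS : (0 : ℝ) < cStar := lt_of_lt_of_le hcstar hcc
  -- the margin is a.e.-measurable (otherwise the law would be the zero measure)
  have haem : AEMeasurable (fun zS : X × Finset (Fin c) => u zS.1) μ := by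
    by_contra h
    rw [Measure.map_of_not_aemeasurable h] at hlaw
    have h0 : ((volume.restrict (Set.Icc (0:ℝ) 1)).withDensity
        fun t => ENNReal.ofReal (d t)) Set.univ = 0 := by rw [← hlaw]; simp
    rw [withDensity_apply _ MeasurableSet.univ, Measure.restrict_univ] at h0
    have hlb : ENNReal.ofReal cstar * volume (Set.Icc (0:ℝ) 1)
        ≤ ∫⁻ t, ENNReal.ofReal (d t) ∂(volume.restrict (Set.Icc (0:ℝ) 1)) := by
      calc ENNReal.ofReal cstar * volume (Set.Icc (0:ℝ) 1)
          = ∫⁻ _ in Set.Icc (0:ℝ) 1, ENNReal.ofReal cstar := (setLIntegral_const _ _).symm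
        _ ≤ ∫⁻ t in Set.Icc (0:ℝ) 1, ENNReal.ofReal (d t) := by
            refine lintegral_mono_ae ?_
            filter_upwards [ae_restrict_mem measurableSet_Icc] with t ht using
              ENNReal.ofReal_le_ofReal (hd t ht).1
    rw [h0] at hlb
    simp only [Real.volume_Icc, sub_zero, ENNReal.ofReal_one, mul_one,
      nonpos_iff_eq_zero, ENNReal.ofReal_eq_zero] at hlb
    linarith
  -- computing measures of margin-preimages via the law
  have hmap : ∀ s : Set ℝ, MeasurableSet s →
      μ ((fun zS : X × Finset (Fin c) => u zS.1) ⁻¹' s)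
        = ∫⁻ t in s ∩ Set.Icc (0:ℝ) 1, ENNReal.ofReal (d t) := by
    intro s hs
    rw [← Measure.map_apply_of_aemeasurable haem hs, hlaw, withDensity_apply _ hs,
      Measure.restrict_restrict hs]
  -- the null set from purity
  have hN : μ {zS : X × Finset (Fin c) | ¬ (u zS.1 ≥ e → ∀ j ∈ zS.2, j = y zS.1)} = 0 := by
    rw [Filter.eventually_iff, mem_ae_iff] at hpure
    have : {zS : X × Finset (Fin c) | ¬ (u zS.1 ≥ e → ∀ j ∈ zS.2, j = y zS.1)}
        = {zS : X × Finset (Fin c) | u zS.1 ≥ e → ∀ j ∈ zS.2, j = y zS.1}ᶜ := rfl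
    rw [this]
    exact hpure
  -- second conclusion
  have key2 : ∀ x, u x ≥ e_new →
      η x (y x) - e_new ≥ (1 + ε / (6 * α * l)) * (η x (y x) - e) := by
    intro x hx
    obtain ⟨he1, he2, hlow, hhigh⟩ := hchoice x hx
    have hk : (1 + ε / (6 * α * l)) * (η x (y x) - e)
        = (η x (y x) - e) + ε / (6 * l * α) * (η x (y x) - e) := by ring
    linarith
  refine ⟨?_, key2⟩
  intro x hx j
  rcases eq_or_ne j (y x) with rfl | hj
  · exact le_refl _
  obtain ⟨he1, he2, hlow, hhigh⟩ := hchoice x hx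
  have hηe : (0 : ℝ) < η x (y x) - e := by linarith
  have huxε : ε ≤ u x := le_trans he_new hx
  have hux0 : (0 : ℝ) < u x := lt_of_lt_of_le hε0 huxε
  have he_lt1 : e < 1 := lt_of_lt_of_le he1 he2
  -- key bound on the correction term, for every label k
  have hb : ∀ k : Fin c,
      α * (μ ({zS | k ∈ zS.2 ∧ k ≠ y zS.1} ∩ {zS | u zS.1 ≥ u x})).toReal /
        (μ {zS | u zS.1 ≥ u x}).toReal ≤ ε / 3 := by
    intro k
    rcases le_or_gt e (u x) with hge | hlt
    · -- the intersection is null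
      have hsub : {zS : X × Finset (Fin c) | k ∈ zS.2 ∧ k ≠ y zS.1} ∩ {zS | u zS.1 ≥ u x}
          ⊆ {zS | ¬ (u zS.1 ≥ e → ∀ j ∈ zS.2, j = y zS.1)} := by
        rintro ⟨z, S⟩ ⟨⟨hkS, hky⟩, hz⟩
        intro himp
        exact hky (himp (le_trans hge hz) k hkS)
      have h0 : μ ({zS | k ∈ zS.2 ∧ k ≠ y zS.1} ∩ {zS : X × Finset (Fin c) | u zS.1 ≥ u x}) = 0 :=
        measure_mono_null hsub hN
      rw [h0]
      simp only [ENNReal.toReal_zero, mul_zero, zero_div]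
      positivity
    · -- u x < e : use the density bounds
      -- numerator bound
      have hsub : {zS : X × Finset (Fin c) | k ∈ zS.2 ∧ k ≠ y zS.1} ∩ {zS | u zS.1 ≥ u x}
          ⊆ {zS | ¬ (u zS.1 ≥ e → ∀ j ∈ zS.2, j = y zS.1)}
            ∪ (fun zS : X × Finset (Fin c) => u zS.1) ⁻¹' Set.Ico (u x) e := by
        rintro ⟨z, S⟩ ⟨⟨hkS, hky⟩, hz⟩
        rcases le_or_gt e (u z) with h1 | h1
        · exact Or.inl (fun himp => hky (himp h1 k hkS))
        · exact Or.inr ⟨hz, h1⟩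
      have hnum1 : μ ({zS | k ∈ zS.2 ∧ k ≠ y zS.1} ∩ {zS : X × Finset (Fin c) | u zS.1 ≥ u x})
          ≤ ENNReal.ofReal (cStar * (e - u x)) := by
        calc μ ({zS | k ∈ zS.2 ∧ k ≠ y zS.1} ∩ {zS : X × Finset (Fin c) | u zS.1 ≥ u x})
            ≤ μ ({zS | ¬ (u zS.1 ≥ e → ∀ j ∈ zS.2, j = y zS.1)}
                ∪ (fun zS : X × Finset (Fin c) => u zS.1) ⁻¹' Set.Ico (u x) e) :=
              measure_mono hsub
          _ ≤ μ {zS | ¬ (u zS.1 ≥ e → ∀ j ∈ zS.2, j = y zS.1)}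
              + μ ((fun zS : X × Finset (Fin c) => u zS.1) ⁻¹' Set.Ico (u x) e) :=
              measure_union_le _ _
          _ = μ ((fun zS : X × Finset (Fin c) => u zS.1) ⁻¹' Set.Ico (u x) e) := by
              rw [hN, zero_add]
          _ = ∫⁻ t in Set.Ico (u x) e ∩ Set.Icc (0:ℝ) 1, ENNReal.ofReal (d t) :=
              hmap _ measurableSet_Ico
          _ ≤ ∫⁻ _ in Set.Ico (u x) e ∩ Set.Icc (0:ℝ) 1, ENNReal.ofReal cStar := by
              refine lintegral_mono_ae ?_
              filter_upwards [ae_restrict_mem ((measurableSet_Ico).inter measurableSet_Icc)]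
                with t ht using ENNReal.ofReal_le_ofReal (hd t ht.2).2
          _ = ENNReal.ofReal cStar * volume (Set.Ico (u x) e ∩ Set.Icc (0:ℝ) 1) :=
              setLIntegral_const _ _
          _ ≤ ENNReal.ofReal cStar * volume (Set.Ico (u x) e) := by
              exact mul_le_mul_right (measure_mono Set.inter_subset_left) _
          _ = ENNReal.ofReal (cStar * (e - u x)) := by
              rw [Real.volume_Ico, ← ENNReal.ofReal_mul hcS.le]
      -- denominator bound
      have hden1 : ENNReal.ofReal (cstar * (1 - u x))
          ≤ μ {zS : X × Finset (Fin c) | u zS.1 ≥ u x} := by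
        have hUeq : {zS : X × Finset (Fin c) | u zS.1 ≥ u x}
            = (fun zS : X × Finset (Fin c) => u zS.1) ⁻¹' Set.Ici (u x) := rfl
        rw [hUeq, hmap _ measurableSet_Ici]
        have hset : Set.Ici (u x) ∩ Set.Icc (0:ℝ) 1 = Set.Icc (u x) 1 := by
          ext t
          simp only [Set.mem_inter_iff, Set.mem_Ici, Set.mem_Icc]
          constructor
          · rintro ⟨h1, h2, h3⟩; exact ⟨h1, h3⟩
          · rintro ⟨h1, h2⟩; exact ⟨h1, le_trans hux0.le h1, h2⟩
        rw [hset]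
        calc ENNReal.ofReal (cstar * (1 - u x))
            = ENNReal.ofReal cstar * volume (Set.Icc (u x) 1) := by
              rw [Real.volume_Icc, ← ENNReal.ofReal_mul hcstar.le]
          _ = ∫⁻ _ in Set.Icc (u x) 1, ENNReal.ofReal cstar := (setLIntegral_const _ _).symm
          _ ≤ ∫⁻ t in Set.Icc (u x) 1, ENNReal.ofReal (d t) := by
              refine lintegral_mono_ae ?_
              filter_upwards [ae_restrict_mem measurableSet_Icc] with t ht using
                ENNReal.ofReal_le_ofReal (hd t ⟨le_trans hux0.le ht.1, ht.2⟩).1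
      -- pass to real numbers
      have hfin : μ {zS : X × Finset (Fin c) | u zS.1 ≥ u x} ≠ ⊤ := measure_ne_top μ _
      have hnumR : (μ ({zS | k ∈ zS.2 ∧ k ≠ y zS.1}
          ∩ {zS : X × Finset (Fin c) | u zS.1 ≥ u x})).toReal ≤ cStar * (e - u x) := by
        have := ENNReal.toReal_mono ENNReal.ofReal_ne_top hnum1
        rwa [ENNReal.toReal_ofReal (by nlinarith)] at this
      have hdenR : cstar * (1 - u x)
          ≤ (μ {zS : X × Finset (Fin c) | u zS.1 ≥ u x}).toReal := by
        have := ENNReal.toReal_mono hfin hden1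
        rwa [ENNReal.toReal_ofReal (by nlinarith)] at this
      have hden0 : (0 : ℝ) < cstar * (η x (y x) - e) := by positivity
      have hnum2 : (μ ({zS | k ∈ zS.2 ∧ k ≠ y zS.1}
          ∩ {zS : X × Finset (Fin c) | u zS.1 ≥ u x})).toReal
          ≤ cStar * (ε / (3 * l * α) * (η x (y x) - e)) := by
        have h1 : e - u x ≤ ε / (3 * l * α) * (η x (y x) - e) := by linarith
        nlinarith
      have hden2 : cstar * (η x (y x) - e)
          ≤ (μ {zS : X × Finset (Fin c) | u zS.1 ≥ u x}).toReal := by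
        nlinarith
      have hnn : (0 : ℝ) ≤ cStar * (ε / (3 * l * α) * (η x (y x) - e)) := by
        apply mul_nonneg hcS.le
        apply mul_nonneg (div_nonneg hε0.le (by positivity)) hηe.le
      calc α * (μ ({zS | k ∈ zS.2 ∧ k ≠ y zS.1}
            ∩ {zS : X × Finset (Fin c) | u zS.1 ≥ u x})).toReal /
            (μ {zS : X × Finset (Fin c) | u zS.1 ≥ u x}).toReal
          = α * ((μ ({zS | k ∈ zS.2 ∧ k ≠ y zS.1}
            ∩ {zS : X × Finset (Fin c) | u zS.1 ≥ u x})).toReal /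
            (μ {zS : X × Finset (Fin c) | u zS.1 ≥ u x}).toReal) := by ring
        _ ≤ α * (cStar * (ε / (3 * l * α) * (η x (y x) - e)) / (cstar * (η x (y x) - e))) :=
            mul_le_mul_of_nonneg_left (div_le_div₀ hnn hnum2 hden0 hden2) hα.le
        _ = ε / 3 := by
            rw [hl]; field_simp
  -- combine the approximation bounds for y x and j
  have hby := hb (y x)
  have hbj := hb j
  have h1 := happrox x (y x)
  have h2 := happrox x j
  have h1' := abs_le.mp h1
  have h2' := abs_le.mp h2
  have hjy : η x j ≤ η x (y x) - u x := (hu x).2 ⟨j, hj, rfl⟩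
  linarith [h1'.1, h1'.2, h2'.1, h2'.2]
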